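/- No super-exponential decay for positive solutions: let V : ℝ → ℝ be positive, C², integrable against e^{bξ} for every b > 0, and satisfy c V' − d V'' ≥ a̲ V + b̲ (J∗V) on ℝ with b̲ > 0 and a̲ ∈ ℝ, where d ≥ 0, c ∈ ℝ, and J is as usual with J > 0 on an open interval. Then multiplying by e^{bξ} and integrating gives (−cb − db² ) V_b ≥ a̲ V_b + b̲ V_b ∫ J(ξ)e^{bξ}dξ where V_b = ∫ V(ξ)e^{bξ}dξ > 0; hence −cb − db² − b̲∫J(ξ)e^{bξ}dξ ≥ a̲ for every b > 0 for which V_b < ∞. Since the left side tends to −∞ as b → ∞, V_b cannot be finite for all b > 0. -/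

import Mathlib

open MeasureTheory Real Filter
open scoped Convolution

lemma parts_aux (b : ℝ) (u : ℝ → ℝ) (hu : Differentiable ℝ u)
    (hui : Integrable (fun ξ => u ξ * Real.exp (b * ξ)))
    (hui' : Integrable (fun ξ => deriv u ξ * Real.exp (b * ξ)))
    (htop : Tendsto (fun ξ => u ξ * Real.exp (b * ξ)) atTop (nhds 0))
    (hbot : Tendsto (fun ξ => u ξ * Real.exp (b * ξ)) atBot (nhds 0)) :
    (∫ ξ : ℝ, deriv u ξ * Real.exp (b * ξ)) = -b * ∫ ξ : ℝ, u ξ * Real.exp (b * ξ) := by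
  have hder : ∀ x : ℝ, HasDerivAt (fun ξ => u ξ * Real.exp (b * ξ))
      (deriv u x * Real.exp (b * x) + b * (u x * Real.exp (b * x))) x := by
    intro x
    have h1 : HasDerivAt u (deriv u x) x := (hu x).hasDerivAt
    have h2 : HasDerivAt (fun ξ : ℝ => Real.exp (b * ξ)) (Real.exp (b * x) * (b * 1)) x :=
      ((hasDerivAt_id x).const_mul b).exp
    have : HasDerivAt (fun ξ => u ξ * Real.exp (b * ξ))
        (deriv u x * Real.exp (b * x) + u x * (Real.exp (b * x) * (b * 1))) x := h1.mul h2
    convert this using 1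
    ring
  have key : (∫ ξ : ℝ, (deriv u ξ * Real.exp (b * ξ) + b * (u ξ * Real.exp (b * ξ)))) = 0 - 0 :=
    integral_of_hasDerivAt_of_tendsto hder (hui'.add (hui.const_mul b)) hbot htop
  rw [integral_add hui' (hui.const_mul b), integral_const_mul] at key
  linarith

set_option maxHeartbeats 1000000 in
theorem no_superexponential_decay (V J : ℝ → ℝ) (c d ab bb : ℝ) (hd : 0 ≤ d)
    (hV : ∀ ξ : ℝ, 0 < V ξ) (hV2 : ContDiff ℝ 2 V) (hbb : 0 < bb)
    (hJc : Continuous J) (hJeven : ∀ s, J (-s) = J s) (hJnonneg : ∀ s, 0 ≤ J s)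
    (hJint : (∫ s : ℝ, J s) = 1)
    (hJmom : ∀ ρ : ℝ, Integrable (fun s => J s * Real.exp (ρ * s)))
    (hJsupp : ∃ x y : ℝ, x < y ∧ ∀ s ∈ Set.Ioo x y, 0 < J s)
    (hineq : ∀ ξ : ℝ, ab * V ξ + bb * (∫ η : ℝ, J (ξ - η) * V η)
      ≤ c * deriv V ξ - d * deriv (deriv V) ξ)
    (hint : ∀ b : ℝ, 0 < b →
      Integrable (fun ξ : ℝ => V ξ * Real.exp (b * ξ)) ∧
      Integrable (fun ξ : ℝ => deriv V ξ * Real.exp (b * ξ)) ∧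
      Integrable (fun ξ : ℝ => deriv (deriv V) ξ * Real.exp (b * ξ)) ∧
      Tendsto (fun ξ : ℝ => V ξ * Real.exp (b * ξ)) atTop (nhds 0) ∧
      Tendsto (fun ξ : ℝ => V ξ * Real.exp (b * ξ)) atBot (nhds 0) ∧
      Tendsto (fun ξ : ℝ => deriv V ξ * Real.exp (b * ξ)) atTop (nhds 0) ∧
      Tendsto (fun ξ : ℝ => deriv V ξ * Real.exp (b * ξ)) atBot (nhds 0)) :
    False := by
  -- find a subinterval of positivity of J lying in the positive half-line
  obtain ⟨p, q, hpq, hp0, hJpos⟩ : ∃ p q : ℝ, p < q ∧ 0 < p ∧ ∀ s ∈ Set.Ioo p q, 0 < J s := by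
    obtain ⟨x, y, hxy, hpos⟩ := hJsupp
    rcases lt_or_ge 0 y with hy | hy
    · refine ⟨(max x 0 + y) / 2, y, ?_, ?_, ?_⟩
      · have := max_lt hxy hy; linarith
      · have h0 : (0:ℝ) ≤ max x 0 := le_max_right x 0; linarith
      · intro s hs
        refine hpos s ⟨?_, hs.2⟩
        have hx : x ≤ max x 0 := le_max_left x 0
        have := max_lt hxy hy
        have : max x 0 < (max x 0 + y) / 2 := by linarith
        linarith [hs.1]
    · refine ⟨(-y + -x) / 2, -x, ?_, ?_, ?_⟩
      · linarith
      · linarith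
      · intro s hs
        have h1 : x < -s := by
          have := hs.2; linarith
        have h2 : -s < y := by
          have := hs.1; linarith
        have := hpos (-s) ⟨h1, h2⟩
        rwa [hJeven s] at this
  -- positive mass of J on (p,q)
  set K : ℝ := ∫ s in p..q, J s with hK
  have hKpos : 0 < K :=
    intervalIntegral.intervalIntegral_pos_of_pos_on (hJc.intervalIntegrable p q) hJpos hpq
  have hVd : Differentiable ℝ V := hV2.differentiable (by norm_num)
  have hV2' : ContDiff ℝ (1 + 1) V := by exact_mod_cast hV2
  have hV'd : Differentiable ℝ (deriv V) :=
    ((contDiff_succ_iff_deriv.mp hV2').2.2).differentiable (by norm_num)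
  -- the main inequality for each b > 0
  have main : ∀ b : ℝ, 0 < b → ab + c * b + d * b ^ 2 + bb * (K * Real.exp (b * p)) ≤ 0 := by
    intro b hb
    obtain ⟨hI0, hI1, hI2, ht1, ht2, ht3, ht4⟩ := hint b hb
    have hgJ : Integrable (fun s => J s * Real.exp (b * s)) := hJmom b
    set Vb : ℝ := ∫ ξ : ℝ, V ξ * Real.exp (b * ξ) with hVbdef
    set Mb : ℝ := ∫ s : ℝ, J s * Real.exp (b * s) with hMbdef
    have hVb : 0 < Vb := by
      rw [hVbdef, integral_pos_iff_support_of_nonneg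
        (fun ξ => le_of_lt (mul_pos (hV ξ) (Real.exp_pos _))) hI0]
      have : Function.support (fun ξ : ℝ => V ξ * Real.exp (b * ξ)) = Set.univ := by
        ext ξ
        simp only [Function.mem_support, Set.mem_univ, iff_true]
        exact (mul_pos (hV ξ) (Real.exp_pos _)).ne'
      rw [this]
      simp
    -- integration by parts
    have IP1 : (∫ ξ : ℝ, deriv V ξ * Real.exp (b * ξ)) = -b * Vb :=
      parts_aux b V hVd hI0 hI1 ht1 ht2
    have IP2 : (∫ ξ : ℝ, deriv (deriv V) ξ * Real.exp (b * ξ)) = b ^ 2 * Vb := by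
      have := parts_aux b (deriv V) hV'd hI1 hI2 ht3 ht4
      rw [this, IP1]; ring
    -- convolution
    set L := ContinuousLinearMap.mul ℝ ℝ with hL
    set fV : ℝ → ℝ := fun ξ => V ξ * Real.exp (b * ξ) with hfV
    set gJ : ℝ → ℝ := fun s => J s * Real.exp (b * s) with hgJdef
    have hconv_eq : ∀ ξ : ℝ, (fV ⋆[L, volume] gJ) ξ
        = (∫ η : ℝ, J (ξ - η) * V η) * Real.exp (b * ξ) := by
      intro ξ
      rw [convolution_def, ← integral_mul_const]
      congr 1
      ext t
      simp only [hfV, hgJdef, hL, ContinuousLinearMap.mul_apply']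
      rw [show b * ξ = b * t + b * (ξ - t) by ring, Real.exp_add]
      ring
    have hconv_int : Integrable (fV ⋆[L, volume] gJ) := hI0.integrable_convolution L hgJ
    have hconv_integral : (∫ ξ : ℝ, (fV ⋆[L, volume] gJ) ξ) = Vb * Mb := by
      rw [integral_convolution L hI0 hgJ, ContinuousLinearMap.mul_apply']
    -- integrate the differential inequality
    have hle : ∀ ξ : ℝ, ab * (V ξ * Real.exp (b * ξ)) + bb * ((fV ⋆[L, volume] gJ) ξ)
        ≤ c * (deriv V ξ * Real.exp (b * ξ)) - d * (deriv (deriv V) ξ * Real.exp (b * ξ)) := by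
      intro ξ
      have h := hineq ξ
      have he : (0:ℝ) < Real.exp (b * ξ) := Real.exp_pos _
      rw [hconv_eq ξ]
      calc ab * (V ξ * Real.exp (b * ξ))
            + bb * ((∫ η : ℝ, J (ξ - η) * V η) * Real.exp (b * ξ))
          = (ab * V ξ + bb * (∫ η : ℝ, J (ξ - η) * V η)) * Real.exp (b * ξ) := by ring
        _ ≤ (c * deriv V ξ - d * deriv (deriv V) ξ) * Real.exp (b * ξ) :=
            mul_le_mul_of_nonneg_right h he.le
        _ = c * (deriv V ξ * Real.exp (b * ξ)) - d * (deriv (deriv V) ξ * Real.exp (b * ξ)) := by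
            ring
    have hLint : Integrable (fun ξ : ℝ => ab * (V ξ * Real.exp (b * ξ))
        + bb * ((fV ⋆[L, volume] gJ) ξ)) := (hI0.const_mul ab).add (hconv_int.const_mul bb)
    have hRint : Integrable (fun ξ : ℝ => c * (deriv V ξ * Real.exp (b * ξ))
        - d * (deriv (deriv V) ξ * Real.exp (b * ξ))) :=
      (hI1.const_mul c).sub (hI2.const_mul d)
    have hmono := integral_mono hLint hRint hle
    rw [integral_add (hI0.const_mul ab) (hconv_int.const_mul bb),
      integral_sub (hI1.const_mul c) (hI2.const_mul d)] at hmono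
    rw [integral_const_mul, integral_const_mul, integral_const_mul, integral_const_mul,
      hconv_integral, IP1, IP2] at hmono
    -- hmono : ab * Vb + bb * (Vb * Mb) ≤ c * (-b * Vb) - d * (b ^ 2 * Vb)
    have hsum : ab + c * b + d * b ^ 2 + bb * Mb ≤ 0 := by
      nlinarith [hmono, hVb, mul_pos hVb hbb]
    -- lower bound Mb ≥ K * exp (b * p)
    have hMbK : K * Real.exp (b * p) ≤ Mb := by
      have h1 : (∫ s in p..q, J s * Real.exp (b * s)) ≤ Mb := by
        rw [hMbdef, intervalIntegral.integral_of_le hpq.le]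
        exact setIntegral_le_integral hgJ
          (Eventually.of_forall fun s => mul_nonneg (hJnonneg s) (Real.exp_pos _).le)
      have h2 : (∫ s in p..q, J s * Real.exp (b * p)) ≤ ∫ s in p..q, J s * Real.exp (b * s) := by
        apply intervalIntegral.integral_mono_on hpq.le
        · exact (hJc.mul continuous_const).intervalIntegrable p q
        · exact (hJc.mul (continuous_const.mul continuous_id).rexp).intervalIntegrable p q
        · intro s hs
          have : b * p ≤ b * s := mul_le_mul_of_nonneg_left hs.1 hb.le
          exact mul_le_mul_of_nonneg_left (Real.exp_le_exp.mpr this) (hJnonneg s)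
      have h3 : (∫ s in p..q, J s * Real.exp (b * p)) = K * Real.exp (b * p) := by
        rw [intervalIntegral.integral_mul_const]
      linarith
    linarith [mul_le_mul_of_nonneg_left hMbK hbb.le, hsum]
  -- contradiction: the exponential term dominates
  set A : ℝ := bb * K * p ^ 2 / 4 with hA
  have hApos : 0 < A := by positivity
  set b : ℝ := max 1 ((|c| + |ab| + 1) / A) with hbdef
  have hb1 : (1:ℝ) ≤ b := le_max_left _ _
  have hbpos : 0 < b := lt_of_lt_of_le one_pos hb1
  have hbA : |c| + |ab| + 1 ≤ A * b := by
    have : (|c| + |ab| + 1) / A ≤ b := le_max_right _ _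
    calc |c| + |ab| + 1 = (|c| + |ab| + 1) / A * A := by field_simp
      _ ≤ b * A := mul_le_mul_of_nonneg_right this hApos.le
      _ = A * b := by ring
  have hexp : (b * p) ^ 2 / 4 ≤ Real.exp (b * p) := by
    have h1 : b * p / 2 + 1 ≤ Real.exp (b * p / 2) := Real.add_one_le_exp _
    have h2 : Real.exp (b * p) = Real.exp (b * p / 2) * Real.exp (b * p / 2) := by
      rw [← Real.exp_add]; ring_nf
    have hbp : 0 ≤ b * p := le_of_lt (mul_pos hbpos hp0)
    nlinarith
  have hkey := main b hbpos
  have hexp2 : A * b ^ 2 ≤ bb * (K * Real.exp (b * p)) := by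
    have := mul_le_mul_of_nonneg_left hexp (mul_pos hbb hKpos).le
    calc A * b ^ 2 = bb * K * ((b * p) ^ 2 / 4) := by rw [hA]; ring
      _ ≤ bb * K * Real.exp (b * p) := this
      _ = bb * (K * Real.exp (b * p)) := by ring
  have habs1 : -|c| ≤ c := neg_abs_le c
  have habs2 : -|ab| ≤ ab := neg_abs_le ab
  have e1 : (|c| + |ab| + 1) * b ≤ A * b ^ 2 := by
    nlinarith [mul_le_mul_of_nonneg_right hbA hbpos.le]
  have e2 : |c| * b + |ab| + 1 ≤ (|c| + |ab| + 1) * b := by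
    nlinarith [abs_nonneg ab, abs_nonneg c]
  have e3 : -(|c| * b) ≤ c * b := by
    nlinarith [mul_le_mul_of_nonneg_right habs1 hbpos.le]
  linarith [hexp2, mul_nonneg hd (sq_nonneg b), habs2]
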